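/- arXiv:2208.00801 — 3 statements merged into one kernel-verified Lean document; each statement's English description precedes it below -/
import Mathlib

section
/- If X and Y are graphs on n vertices with 2·Δ(X)·Δ(Y) < n, then there exists a bijection σ : V(X) → V(Y) such that for every edge {a,b} of X, the pair {σ(a),σ(b)} is not an edge of Y. -/
/-- The friends-and-strangers graph `FS X Y`: vertices are bijections
`V(X) ≃ V(Y)`; two bijections are adjacent iff they differ precisely on two
`X`-adjacent vertices, with the swapped values adjacent in `Y`. -/
def FS {V W : Type*} (X : SimpleGraph V) (Y : SimpleGraph W) : SimpleGraph (V ≃ W) where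
  Adj σ σ' := ∃ a b : V, X.Adj a b ∧ Y.Adj (σ a) (σ b) ∧ σ' a = σ b ∧ σ' b = σ a ∧
    ∀ c : V, c ≠ a → c ≠ b → σ' c = σ c
  symm := by
    constructor
    rintro σ σ' ⟨a, b, hX, hY, h1, h2, h3⟩
    refine ⟨a, b, hX, ?_, h2.symm, h1.symm, fun c hca hcb => (h3 c hca hcb).symm⟩
    rw [h1, h2]; exact hY.symm
  loopless := by
    constructor
    rintro σ ⟨a, b, hX, _, h1, _⟩
    exact hX.ne (σ.injective h1)

/-- `u` and `v` are `(X,Y)`-exchangeable from `σ` if `σ` and `τ_{uv} ∘ σ`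
lie in the same connected component of `FS X Y`. -/
def Exchangeable {V W : Type*} [DecidableEq W] (X : SimpleGraph V) (Y : SimpleGraph W)
    (u v : W) (σ : V ≃ W) : Prop :=
  (FS X Y).Reachable σ (σ.trans (Equiv.swap u v))

theorem catlin_sauer_spencer {V W : Type*} [Fintype V] [Fintype W]
    (n : ℕ) (hV : Fintype.card V = n) (hW : Fintype.card W = n)
    (X : SimpleGraph V) (Y : SimpleGraph W)
    [DecidableRel X.Adj] [DecidableRel Y.Adj]
    (h : 2 * X.maxDegree * Y.maxDegree < n) :
    ∃ σ : V ≃ W, ∀ a b : V, X.Adj a b → ¬ Y.Adj (σ a) (σ b) := by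
  classical
  have hne : Nonempty (V ≃ W) := Fintype.card_eq.mp (hV.trans hW.symm)
  obtain ⟨σ, -, hσ⟩ := Finset.exists_min_image (Finset.univ : Finset (V ≃ W))
    (fun σ => (Finset.univ.filter
      fun p : V × V => X.Adj p.1 p.2 ∧ Y.Adj (σ p.1) (σ p.2)).card)
    ⟨hne.some, Finset.mem_univ _⟩
  refine ⟨σ, fun u v hX hY => ?_⟩
  set A : Finset V := (X.neighborFinset u).biUnion
    (fun c => (Y.neighborFinset (σ c)).image σ.symm) with hAdef
  set B : Finset V := ((Y.neighborFinset (σ u)).image σ.symm).biUnion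
    (fun c => X.neighborFinset c) with hBdef
  have hA : ∀ w', w' ∈ A ↔ ∃ c, X.Adj u c ∧ Y.Adj (σ c) (σ w') := by
    intro w'
    simp [hAdef, SimpleGraph.mem_neighborFinset, Equiv.symm_apply_eq]
  have hB : ∀ w', w' ∈ B ↔ ∃ c, Y.Adj (σ u) (σ c) ∧ X.Adj c w' := by
    intro w'
    simp only [hBdef, Finset.mem_biUnion, Finset.mem_image,
      SimpleGraph.mem_neighborFinset, Equiv.symm_apply_eq]
    constructor
    · rintro ⟨c, ⟨z, hz, hzc⟩, hc⟩
      exact ⟨c, by rwa [hzc] at hz, hc⟩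
    · rintro ⟨c, hz, hc⟩; exact ⟨c, ⟨σ c, hz, rfl⟩, hc⟩
  have hcardA : A.card ≤ X.maxDegree * Y.maxDegree := by
    calc A.card ≤ ∑ c ∈ X.neighborFinset u, ((Y.neighborFinset (σ c)).image σ.symm).card :=
        Finset.card_biUnion_le
      _ ≤ ∑ _c ∈ X.neighborFinset u, Y.maxDegree := by
        refine Finset.sum_le_sum fun c _ => ?_
        calc ((Y.neighborFinset (σ c)).image σ.symm).card
            ≤ (Y.neighborFinset (σ c)).card := Finset.card_image_le
          _ = Y.degree (σ c) := rfl
          _ ≤ Y.maxDegree := Y.degree_le_maxDegree _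
      _ = X.degree u * Y.maxDegree := by
        rw [Finset.sum_const, smul_eq_mul]; rfl
      _ ≤ X.maxDegree * Y.maxDegree :=
        Nat.mul_le_mul_right _ (X.degree_le_maxDegree u)
  have hcardB : B.card ≤ Y.maxDegree * X.maxDegree := by
    calc B.card ≤ ∑ c ∈ (Y.neighborFinset (σ u)).image σ.symm, (X.neighborFinset c).card :=
        Finset.card_biUnion_le
      _ ≤ ∑ _c ∈ (Y.neighborFinset (σ u)).image σ.symm, X.maxDegree :=
        Finset.sum_le_sum fun c _ => X.degree_le_maxDegree c
      _ = ((Y.neighborFinset (σ u)).image σ.symm).card * X.maxDegree := by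
        rw [Finset.sum_const, smul_eq_mul]
      _ ≤ Y.degree (σ u) * X.maxDegree :=
        Nat.mul_le_mul_right _ Finset.card_image_le
      _ ≤ Y.maxDegree * X.maxDegree :=
        Nat.mul_le_mul_right _ (Y.degree_le_maxDegree _)
  have huA : u ∈ A := (hA u).mpr ⟨v, hX, hY.symm⟩
  have huB : u ∈ B := (hB u).mpr ⟨v, hY, hX.symm⟩
  set S : Finset V := insert v (A ∪ B) with hSdef
  have hScard : S.card < Fintype.card V := by
    have h1 : (A ∪ B).card + 1 ≤ A.card + B.card := by
      have h2 := Finset.card_union_add_card_inter A B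
      have h3 : 0 < (A ∩ B).card :=
        Finset.card_pos.mpr ⟨u, Finset.mem_inter.mpr ⟨huA, huB⟩⟩
      omega
    calc S.card ≤ (A ∪ B).card + 1 := Finset.card_insert_le _ _
      _ ≤ A.card + B.card := h1
      _ ≤ X.maxDegree * Y.maxDegree + Y.maxDegree * X.maxDegree := add_le_add hcardA hcardB
      _ = 2 * X.maxDegree * Y.maxDegree := by ring
      _ < n := h
      _ = Fintype.card V := hV.symm
  obtain ⟨w, hw⟩ : ∃ w, w ∉ S := by
    by_contra hc
    push_neg at hc
    have : (Finset.univ : Finset V).card ≤ S.card :=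
      Finset.card_le_card fun x _ => hc x
    rw [Finset.card_univ] at this
    omega
  have hwA : w ∉ A := fun h' => hw (Finset.mem_insert_of_mem (Finset.mem_union_left _ h'))
  have hwB : w ∉ B := fun h' => hw (Finset.mem_insert_of_mem (Finset.mem_union_right _ h'))
  have hwv : w ≠ v := fun h' => hw (h' ▸ Finset.mem_insert_self _ _)
  have hwu : w ≠ u := fun h' => hwA (h' ▸ huA)
  set σ' : V ≃ W := (Equiv.swap u w).trans σ with hσ'def
  have e1 : σ' u = σ w := by simp [hσ'def, Equiv.swap_apply_left]
  have e2 : σ' w = σ u := by simp [hσ'def, Equiv.swap_apply_right]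
  have e3 : ∀ c, c ≠ u → c ≠ w → σ' c = σ c := fun c hcu hcw => by
    simp [hσ'def, Equiv.swap_apply_of_ne_of_ne hcu hcw]
  have huvC : (u, v) ∈ (Finset.univ.filter
      fun p : V × V => X.Adj p.1 p.2 ∧ Y.Adj (σ p.1) (σ p.2)) := by
    simp [hX, hY]
  have key : (Finset.univ.filter
      fun p : V × V => X.Adj p.1 p.2 ∧ Y.Adj (σ' p.1) (σ' p.2))
      ⊆ (Finset.univ.filter
      fun p : V × V => X.Adj p.1 p.2 ∧ Y.Adj (σ p.1) (σ p.2)).erase (u, v) := by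
    rintro ⟨a, b⟩ hp
    simp only [Finset.mem_filter, Finset.mem_univ, true_and] at hp
    obtain ⟨hab, hY'⟩ := hp
    rw [Finset.mem_erase, Finset.mem_filter]
    by_cases hau : a = u
    · by_cases hbw : b = w
      · rw [hau, hbw] at hab hY'
        rw [e1, e2] at hY'
        refine ⟨by simp [hau, hbw, Prod.ext_iff, hwv], Finset.mem_univ _, ?_, ?_⟩
        · rwa [hau, hbw]
        · rw [hau, hbw]; exact hY'.symm
      · by_cases hbu : b = u
        · rw [hau, hbu] at hab; exact absurd hab (X.irrefl)
        · rw [hau] at hY'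
          rw [e1, e3 b hbu hbw] at hY'
          exact absurd ((hA w).mpr ⟨b, by rwa [hau] at hab, hY'.symm⟩) hwA
    · by_cases haw : a = w
      · by_cases hbu : b = u
        · rw [haw, hbu] at hab hY'
          rw [e2, e1] at hY'
          refine ⟨by simp [haw, hbu, Prod.ext_iff, hwu], Finset.mem_univ _, ?_, ?_⟩
          · rwa [haw, hbu]
          · rw [haw, hbu]; exact hY'.symm
        · by_cases hbw : b = w
          · rw [haw, hbw] at hab; exact absurd hab (X.irrefl)
          · rw [haw] at hY'
            rw [e2, e3 b hbu hbw] at hY'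
            exact absurd ((hB w).mpr ⟨b, hY', (by rwa [haw] at hab : X.Adj w b).symm⟩) hwB
      · rw [e3 a hau haw] at hY'
        by_cases hbu : b = u
        · rw [hbu] at hY'
          rw [e1] at hY'
          exact absurd ((hA w).mpr ⟨a, (by rwa [hbu] at hab : X.Adj a u).symm, hY'⟩) hwA
        · by_cases hbw : b = w
          · rw [hbw] at hY'
            rw [e2] at hY'
            exact absurd ((hB w).mpr ⟨a, hY'.symm, by rwa [hbw] at hab⟩) hwB
          · rw [e3 b hbu hbw] at hY'
            exact ⟨by simp [Prod.ext_iff, hau], Finset.mem_univ _, hab, hY'⟩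
  have hlt := lt_of_le_of_lt (Finset.card_le_card key) (Finset.card_erase_lt_of_mem huvC)
  exact absurd (hσ σ' (Finset.mem_univ _)) (not_le.mpr hlt)
end

section
/- Let G and H be graphs on vertex set {1,…,m+2} such that m+1 and m+2 are (G,H)-exchangeable from the identity bijection. Let φ be a graph embedding of G into X and ψ a graph embedding of H into Y (X, Y graphs on n vertices). Then ψ(m+1) and ψ(m+2) are (X,Y)-exchangeable from any bijection σ : V(X) → V(Y) satisfying σ ∘ φ = ψ. -/
theorem fs_exchangeable_of_embeddings {V W : Type*} [DecidableEq W] (m : ℕ)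
    (G H : SimpleGraph (Fin (m + 2)))
    (hGH : Exchangeable G H (⟨m, by omega⟩ : Fin (m + 2)) (⟨m + 1, by omega⟩ : Fin (m + 2))
      (Equiv.refl (Fin (m + 2))))
    (X : SimpleGraph V) (Y : SimpleGraph W)
    (φ : G ↪g X) (ψ : H ↪g Y) (σ : V ≃ W)
    (hσ : ∀ i : Fin (m + 2), σ (φ i) = ψ i) :
    Exchangeable X Y (ψ (⟨m, by omega⟩ : Fin (m + 2))) (ψ (⟨m + 1, by omega⟩ : Fin (m + 2))) σ := by
  classical
  set u : Fin (m + 2) := ⟨m, by omega⟩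
  set v : Fin (m + 2) := ⟨m + 1, by omega⟩
  -- the lifting map
  let Θ : (Fin (m + 2) ≃ Fin (m + 2)) → (V ≃ W) :=
    fun π => (Equiv.Perm.viaEmbedding π φ.toEmbedding).trans σ
  have hΘ_im : ∀ (π : Fin (m + 2) ≃ Fin (m + 2)) (i : Fin (m + 2)), Θ π (φ i) = ψ (π i) := by
    intro π i
    simp only [Θ, Equiv.trans_apply]
    rw [show (φ i : V) = φ.toEmbedding i from rfl, Equiv.Perm.viaEmbedding_apply]
    exact hσ (π i)
  have hΘ_out : ∀ (π : Fin (m + 2) ≃ Fin (m + 2)) (x : V), x ∉ Set.range φ.toEmbedding →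
      Θ π x = σ x := by
    intro π x hx
    simp only [Θ, Equiv.trans_apply]
    rw [Equiv.Perm.viaEmbedding_apply_of_notMem _ _ x hx]
  -- Θ is a graph homomorphism
  have hadj : ∀ {π π' : Fin (m + 2) ≃ Fin (m + 2)}, (FS G H).Adj π π' →
      (FS X Y).Adj (Θ π) (Θ π') := by
    rintro π π' ⟨a, b, hG, hH, h1, h2, h3⟩
    refine ⟨φ a, φ b, φ.map_rel_iff.2 hG, ?_, ?_, ?_, ?_⟩
    · rw [hΘ_im, hΘ_im]; exact ψ.map_rel_iff.2 hH
    · rw [hΘ_im, hΘ_im, h1]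
    · rw [hΘ_im, hΘ_im, h2]
    · intro c hca hcb
      by_cases hc : c ∈ Set.range φ.toEmbedding
      · obtain ⟨i, rfl⟩ := hc
        have hia : i ≠ a := fun h => hca (by rw [h]; rfl)
        have hib : i ≠ b := fun h => hcb (by rw [h]; rfl)
        rw [show φ.toEmbedding i = φ i from rfl, hΘ_im, hΘ_im, h3 i hia hib]
      · rw [hΘ_out _ _ hc, hΘ_out _ _ hc]
  have hreach : ∀ {π π' : Fin (m + 2) ≃ Fin (m + 2)}, (FS G H).Reachable π π' →
      (FS X Y).Reachable (Θ π) (Θ π') := by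
    intro π π' h
    obtain ⟨w⟩ := h
    induction w with
    | nil => exact SimpleGraph.Reachable.refl _
    | cons h _ ih => exact (SimpleGraph.Adj.reachable (hadj h)).trans ih
  have key := hreach hGH
  -- identify endpoints
  have h1 : Θ (Equiv.refl _) = σ := by
    ext x
    by_cases hx : x ∈ Set.range φ.toEmbedding
    · obtain ⟨i, rfl⟩ := hx
      rw [show φ.toEmbedding i = φ i from rfl, hΘ_im]
      exact (hσ i).symm
    · exact hΘ_out _ _ hx
  have h2 : Θ ((Equiv.refl _).trans (Equiv.swap u v)) = σ.trans (Equiv.swap (ψ u) (ψ v)) := by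
    ext x
    by_cases hx : x ∈ Set.range φ.toEmbedding
    · obtain ⟨i, rfl⟩ := hx
      rw [show φ.toEmbedding i = φ i from rfl, hΘ_im]
      simp only [Equiv.trans_apply, Equiv.refl_apply]
      rw [hσ i]
      rcases eq_or_ne i u with rfl | hiu
      · simp [Equiv.swap_apply_left]
      rcases eq_or_ne i v with rfl | hiv
      · simp [Equiv.swap_apply_right]
      · rw [Equiv.swap_apply_of_ne_of_ne hiu hiv,
          Equiv.swap_apply_of_ne_of_ne (fun h => hiu (ψ.injective h))
            (fun h => hiv (ψ.injective h))]
    · rw [hΘ_out _ _ hx]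
      simp only [Equiv.trans_apply]
      rw [Equiv.swap_apply_of_ne_of_ne]
      · intro h
        rw [← hσ u] at h
        exact hx ⟨u, (σ.injective h).symm⟩
      · intro h
        rw [← hσ v] at h
        exact hx ⟨v, (σ.injective h).symm⟩
  rw [h1, h2] at key
  exact key
end

section
/- For n ≥ 4, FS(C_n, S_n) is disconnected, where C_n is the cycle and S_n the star on n vertices. -/
/-- The star on `n` vertices, with center `0`. -/
def starGraph (n : ℕ) : SimpleGraph (Fin n) :=
  SimpleGraph.fromRel (fun i _ => i.val = 0)


open SimpleGraph hiding starGraph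

section Invariant
variable {m : ℕ}

/-- The "next nonzero token clockwise from token 1" invariant. -/
def nxt (σ : Fin (m+4) ≃ Fin (m+4)) : Fin (m+4) :=
  if σ (σ.symm 1 + 1) ≠ 0 then σ (σ.symm 1 + 1) else σ (σ.symm 1 + 1 + 1)

lemma fone : (1 : Fin (m+4)) ≠ 0 := by simp [Fin.ext_iff]

lemma fadd1 (x : Fin (m+4)) : x + 1 ≠ x := by
  intro h; nth_rewrite 2 [← add_zero x] at h
  exact fone (add_left_cancel h)

lemma fadd2 (x : Fin (m+4)) : x + 1 + 1 ≠ x := by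
  intro h
  have h11 : (1 : Fin (m+4)) + 1 = 2 := rfl
  rw [add_assoc, add_eq_left, h11] at h
  have h2 := h
  have : ((2 : Fin (m+4)) : ℕ) = 2 := rfl
  rw [Fin.ext_iff, this] at h2; exact absurd h2 (by simp)

lemma key (σ τ : Fin (m+4) ≃ Fin (m+4)) (a b : Fin (m+4))
    (hab : b = a + 1) (hne : σ a ≠ σ b) (h0 : σ a = 0 ∨ σ b = 0)
    (h1 : τ a = σ b) (h2 : τ b = σ a)
    (h3 : ∀ c : Fin (m+4), c ≠ a → c ≠ b → τ c = σ c) :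
    nxt σ = nxt τ := by
  have hσp : σ (σ.symm 1) = 1 := σ.apply_symm_apply 1
  have hba : b ≠ a := hab ▸ fadd1 a
  rcases h0 with hA | hB
  · -- blank at a
    have hx : σ b ≠ 0 := fun h => hne (hA.trans h.symm)
    have hpa : σ.symm 1 ≠ a := fun h => fone (by rw [← hσp, h, hA])
    by_cases hpb : σ.symm 1 = b
    · -- token 1 at b, moves to a
      have hq : τ.symm 1 = a := by
        rw [Equiv.symm_apply_eq, h1, ← hpb, hσp]
      have h4 : b + 1 ≠ a := by rw [hab]; exact fadd2 a
      have h5 : σ (b+1) ≠ 0 := by rw [← hA]; exact fun h => h4 (σ.injective h)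
      have h6 : τ (a+1) = 0 := by rw [← hab, h2, hA]
      have h7 : τ (a+1+1) = σ (b+1) := by
        rw [← hab]; exact h3 _ h4 (fadd1 b)
      unfold nxt
      rw [hq, hpb, if_pos h5, if_neg (by simp [h6]), h7]
    · -- token 1 not at a or b
      have hq : τ.symm 1 = σ.symm 1 := by
        rw [Equiv.symm_apply_eq, h3 _ hpa hpb, hσp]
      by_cases hp1a : σ.symm 1 + 1 = a
      · have h4 : σ (σ.symm 1 + 1) = 0 := by rw [hp1a, hA]
        have h5 : τ (σ.symm 1 + 1) ≠ 0 := by rw [hp1a, h1]; exact hx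
        have h6 : σ (σ.symm 1 + 1 + 1) = σ b := by rw [hp1a, ← hab]
        unfold nxt
        rw [hq, if_neg (by simp [h4]), if_pos h5, h6, hp1a, h1]
      · have hp1b : σ.symm 1 + 1 ≠ b := by
          rw [hab]; exact fun h => hpa (add_right_cancel h)
        have h4 : σ (σ.symm 1 + 1) ≠ 0 := by
          rw [← hA]; exact fun h => hp1a (σ.injective h)
        have h5 : τ (σ.symm 1 + 1) = σ (σ.symm 1 + 1) := h3 _ hp1a hp1b
        unfold nxt
        rw [hq, if_pos h4, if_pos (h5 ▸ h4), h5]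
  · -- blank at b
    have hx : σ a ≠ 0 := fun h => hne (h.trans hB.symm)
    have hpb : σ.symm 1 ≠ b := fun h => fone (by rw [← hσp, h, hB])
    by_cases hpa : σ.symm 1 = a
    · -- token 1 at a, moves to b
      have hq : τ.symm 1 = b := by
        rw [Equiv.symm_apply_eq, h2, ← hpa, hσp]
      have h4 : σ (a + 1) = 0 := by rw [← hab, hB]
      have h5 : b + 1 ≠ a := by rw [hab]; exact fadd2 a
      have h6 : τ (b+1) = σ (b+1) := h3 _ h5 (fadd1 b)
      have h7 : σ (b+1) ≠ 0 := by rw [← hB]; exact fun h => fadd1 b (σ.injective h)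
      have h8 : σ (a+1+1) = σ (b+1) := by rw [hab]
      unfold nxt
      rw [hq, hpa, if_neg (by simp [h4]), if_pos (h6 ▸ h7), h6, h8]
    · have hq : τ.symm 1 = σ.symm 1 := by
        rw [Equiv.symm_apply_eq, h3 _ hpa hpb, hσp]
      by_cases hp1a : σ.symm 1 + 1 = a
      · have h4 : σ (σ.symm 1 + 1) ≠ 0 := by rw [hp1a]; exact hx
        have h5 : τ (σ.symm 1 + 1) = 0 := by rw [hp1a, h1, hB]
        have h6 : τ (σ.symm 1 + 1 + 1) = σ a := by rw [hp1a, ← hab, h2]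
        unfold nxt
        rw [hq, if_pos h4, if_neg (by simp [h5]), h6, hp1a]
      · have hp1b : σ.symm 1 + 1 ≠ b := by
          rw [hab]; exact fun h => hpa (add_right_cancel h)
        have h4 : σ (σ.symm 1 + 1) ≠ 0 := by
          rw [← hB]; exact fun h => hp1b (σ.injective h)
        have h5 : τ (σ.symm 1 + 1) = σ (σ.symm 1 + 1) := h3 _ hp1a hp1b
        unfold nxt
        rw [hq, if_pos h4, if_pos (h5 ▸ h4), h5]

lemma adj_nxt {σ τ : Fin (m+4) ≃ Fin (m+4)}
    (h : (FS (SimpleGraph.cycleGraph (m+4)) (starGraph (m+4))).Adj σ τ) :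
    nxt σ = nxt τ := by
  obtain ⟨a, b, hX, hY, h1, h2, h3⟩ := h
  have hY' : σ a ≠ σ b ∧ (σ a = 0 ∨ σ b = 0) := by
    rcases hY with ⟨hne, hor⟩
    refine ⟨hne, ?_⟩
    rcases hor with h | h
    · exact Or.inl (Fin.ext h)
    · exact Or.inr (Fin.ext h)
  have hX' : a - b = 1 ∨ b - a = 1 := (cycleGraph_adj (n := m+2)).mp hX
  rcases hX' with h | h
  · -- a = b + 1
    have hab : a = b + 1 := sub_eq_iff_eq_add'.mp h
    exact key σ τ b a hab hY'.1.symm hY'.2.symm h2 h1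
      (fun c hcb hca => h3 c hca hcb)
  · have hab : b = a + 1 := sub_eq_iff_eq_add'.mp h
    exact key σ τ a b hab hY'.1 hY'.2 h1 h2 h3

lemma reach_nxt {σ τ : Fin (m+4) ≃ Fin (m+4)}
    (h : (FS (SimpleGraph.cycleGraph (m+4)) (starGraph (m+4))).Reachable σ τ) :
    nxt σ = nxt τ := by
  obtain ⟨w⟩ := h
  induction w with
  | nil => rfl
  | cons h _ ih => exact (adj_nxt h).trans ih

end Invariant

theorem fs_cycle_star_disconnected (n : ℕ) (hn : 4 ≤ n) :
    ¬ (FS (SimpleGraph.cycleGraph n) (starGraph n)).Connected := by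
  obtain ⟨m, rfl⟩ : ∃ m, n = m + 4 := ⟨n - 4, by omega⟩
  intro hconn
  have hreach := hconn.preconnected (Equiv.refl (Fin (m+4))) (Equiv.swap 2 3)
  have := reach_nxt hreach
  have hv2 : ((2 : Fin (m+4)) : ℕ) = 2 := rfl
  have hv3 : ((3 : Fin (m+4)) : ℕ) = 3 := rfl
  have h12 : (1 : Fin (m+4)) ≠ 2 := by rw [Ne, Fin.ext_iff, hv2]; exact Nat.succ_ne_succ.mpr (Nat.zero_ne_add_one 0)
  have h13 : (1 : Fin (m+4)) ≠ 3 := by rw [Ne, Fin.ext_iff, hv3]; exact Nat.succ_ne_succ.mpr (Nat.zero_ne_add_one 1)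
  have h20 : (2 : Fin (m+4)) ≠ 0 := by rw [Ne, Fin.ext_iff, hv2]; exact Nat.succ_ne_zero 1
  have h30 : (3 : Fin (m+4)) ≠ 0 := by rw [Ne, Fin.ext_iff, hv3]; exact Nat.succ_ne_zero 2
  have h23 : (2 : Fin (m+4)) ≠ 3 := by rw [Ne, Fin.ext_iff, hv2, hv3]; omega
  have h11 : (1 : Fin (m+4)) + 1 = 2 := rfl
  have e1 : nxt (Equiv.refl (Fin (m+4))) = 2 := by
    unfold nxt
    simp [h11, h20]
  have e2 : nxt (Equiv.swap (2 : Fin (m+4)) 3) = 3 := by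
    unfold nxt
    rw [Equiv.symm_swap, Equiv.swap_apply_of_ne_of_ne h12 h13, h11,
      Equiv.swap_apply_left]
    simp [h30]
  rw [e1, e2] at this
  exact h23 this
end
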